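/- arXiv:2009.13590 — 4 statements merged into one kernel-verified Lean document; each statement's English description precedes it below -/
import Mathlib

section
/- Let S be a finite set and F a field. The map sending a partition 𝒦 of S to Map_𝒦(S,F) (the set of functions S → F that are constant on each block of 𝒦) is a bijection from the set of partitions of S onto the set of unital F-subalgebras of the algebra F^S of all functions S → F with pointwise operations. Its inverse sends a unital subalgebra A ⊆ F^S to the partition of S into the equivalence classes of the relation s ~ t iff f(s) = f(t) for all f ∈ A. Moreover, the bijection is order-reversing with respect to refinement and inclusion: 𝒦 ≼ 𝒧 if and only if Map_𝒦(S,F) ⊇ Map_𝒧(S,F). -/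
open scoped BigOperators

noncomputable section

/-- `χ` is an irreducible complex character of `G`. -/
def IsIrrChar (G : Type) [Group G] [Fintype G] (χ : G → ℂ) : Prop :=
  ∃ V : FDRep ℂ G, CategoryTheory.Simple V ∧ χ = FDRep.character V

/-- The type of irreducible complex characters of `G` (denoted `Irr G`). -/
abbrev IrrChar (G : Type) [Group G] [Fintype G] := {χ : G → ℂ // IsIrrChar G χ}

variable (G : Type) [Group G] [Fintype G]

/-- `σ_X = ∑_{χ ∈ X} χ(1)·χ`. -/
def sigmaChar (X : Set (IrrChar G)) : G → ℂ :=
  fun g => ∑ᶠ χ ∈ X, χ.1 1 * χ.1 g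

/-- A subset of `G` is `G`-invariant if it is closed under conjugation. -/
def GInv (K : Set G) : Prop := ∀ g x : G, x ∈ K → g * x * g⁻¹ ∈ K

/-- `Clpt 𝒳`: the partition of `G` into equivalence classes of
`g ~ h ↔ σ_X(g) = σ_X(h)` for all `X ∈ 𝒳`. -/
def Clpt (𝒳 : Set (Set (IrrChar G))) : Set (Set G) :=
  {C | ∃ g : G, C = {h : G | ∀ X ∈ 𝒳, sigmaChar G X h = sigmaChar G X g}}

/-- `χ(K̂) = ∑_{g ∈ K} χ(g)`. -/
def charSum (χ : G → ℂ) (K : Set G) : ℂ := ∑ᶠ g ∈ K, χ g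

/-- `Irpt 𝒦`: the partition of `Irr G` into equivalence classes of
`χ ~ ψ ↔ χ(K̂)/χ(1) = ψ(K̂)/ψ(1)` for all `K ∈ 𝒦`. -/
def Irpt (𝒦 : Set (Set G)) : Set (Set (IrrChar G)) :=
  {Y | ∃ χ : IrrChar G, Y = {ψ : IrrChar G |
      ∀ K ∈ 𝒦, charSum G ψ.1 K / ψ.1 1 = charSum G χ.1 K / χ.1 1}}

/-- `P` refines `Q` (`P ≼ Q`): every block of `P` is contained in a block of `Q`. -/
def Refines {α : Type} (P Q : Set (Set α)) : Prop :=
  ∀ A ∈ P, ∃ B ∈ Q, A ⊆ B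

/-- `(𝒳, 𝒦)` is a supercharacter theory of `G`. -/
def IsSCT (𝒳 : Set (Set (IrrChar G))) (𝒦 : Set (Set G)) : Prop :=
  Setoid.IsPartition 𝒳 ∧ Setoid.IsPartition 𝒦 ∧ (∀ K ∈ 𝒦, GInv G K) ∧
    𝒳.ncard = 𝒦.ncard ∧
    ∀ X ∈ 𝒳, ∀ K ∈ 𝒦, ∀ g ∈ K, ∀ h ∈ K, sigmaChar G X g = sigmaChar G X h

/-- `K̂ = ∑_{g ∈ K} g` in the group algebra. -/
def khat (K : Set G) : MonoidAlgebra ℂ G := ∑ᶠ g ∈ K, MonoidAlgebra.single g (1 : ℂ)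

/-- The central idempotent `e_χ = (χ(1)/|G|) ∑_g χ(g) g⁻¹`. -/
def centIdem (χ : G → ℂ) : MonoidAlgebra ℂ G :=
  (χ 1 / (Fintype.card G : ℂ)) • ∑ g : G, MonoidAlgebra.single g⁻¹ (χ g)

/-- `e_X = ∑_{χ ∈ X} e_χ`. -/
def eIdem (X : Set (IrrChar G)) : MonoidAlgebra ℂ G := ∑ᶠ χ ∈ X, centIdem G χ.1

/-- The linear extension of `χ : G → ℂ` to the group algebra. -/
def charExt (χ : G → ℂ) (z : MonoidAlgebra ℂ G) : ℂ := ∑ g : G, z.coeff g * χ g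

/-- The subalgebra of functions `S → F` constant on each block of `𝒦`. -/
def MapPart (F : Type) [Field F] {S : Type} (𝒦 : Set (Set S)) : Subalgebra F (S → F) where
  carrier := {f | ∀ K ∈ 𝒦, ∀ s ∈ K, ∀ t ∈ K, f s = f t}
  mul_mem' := fun {f g} hf hg K hK s hs t ht => by
    simp only [Pi.mul_apply, hf K hK s hs t ht, hg K hK s hs t ht]
  one_mem' := fun K hK s hs t ht => rfl
  add_mem' := fun {f g} hf hg K hK s hs t ht => by
    simp only [Pi.add_apply, hf K hK s hs t ht, hg K hK s hs t ht]
  zero_mem' := fun K hK s hs t ht => rfl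
  algebraMap_mem' := fun r K hK s hs t ht => rfl

/-- The partition of `S` determined by a subalgebra `A` of `S → F`:
`s ~ t ↔ f(s) = f(t)` for all `f ∈ A`. -/
def algPart (F : Type) [Field F] {S : Type} (A : Subalgebra F (S → F)) : Set (Set S) :=
  {C | ∃ s : S, C = {t : S | ∀ f ∈ A, f t = f s}}



section Stmt0Helpers

set_option linter.unusedSectionVars false

variable {S F : Type} [Fintype S] [Field F]

lemma mem_MapPart {𝒦 : Set (Set S)} {f : S → F} :
    f ∈ MapPart F 𝒦 ↔ ∀ K ∈ 𝒦, ∀ s ∈ K, ∀ t ∈ K, f s = f t := Iff.rfl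

lemma indicator_mem_MapPart {𝒦 : Set (Set S)} (h𝒦 : Setoid.IsPartition 𝒦)
    {B : Set S} (hB : B ∈ 𝒦) : B.indicator (1 : S → F) ∈ MapPart F 𝒦 := by
  rw [mem_MapPart]
  intro K hK s hs t ht
  by_cases hsB : s ∈ B
  · have hKB : K = B := ExistsUnique.unique (h𝒦.2 s) ⟨hK, hs⟩ ⟨hB, hsB⟩
    have htB : t ∈ B := hKB ▸ ht
    rw [Set.indicator_of_mem hsB, Set.indicator_of_mem htB]
    rfl
  · have htB : t ∉ B := by
      intro htB
      have hKB : K = B := ExistsUnique.unique (h𝒦.2 t) ⟨hK, ht⟩ ⟨hB, htB⟩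
      exact hsB (hKB ▸ hs)
    rw [Set.indicator_of_notMem hsB, Set.indicator_of_notMem htB]

lemma sep_fun (A : Subalgebra F (S → F)) {s t : S} (h : ¬ ∀ f ∈ A, f t = f s) :
    ∃ f ∈ A, f t = 0 ∧ f s = 1 := by
  push_neg at h
  obtain ⟨f, hf, hne⟩ := h
  have hne' : f s - f t ≠ 0 := sub_ne_zero.mpr fun h => hne h.symm
  refine ⟨(f s - f t)⁻¹ • (f - algebraMap F (S → F) (f t)),
    A.smul_mem (A.sub_mem hf (A.algebraMap_mem _)) _, ?_, ?_⟩
  · simp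
  · simp only [Pi.smul_apply, Pi.sub_apply, smul_eq_mul]
    rw [show ((algebraMap F (S → F)) (f t)) s = f t from rfl]
    exact inv_mul_cancel₀ hne'

open Classical in
lemma class_indicator_mem (A : Subalgebra F (S → F)) (s : S) :
    (fun u => if ∀ f ∈ A, f u = f s then (1:F) else 0) ∈ A := by
  classical
  set T := Finset.univ.filter (fun t => ¬ ∀ f ∈ A, f t = f s) with hT
  have key : ∀ t : S, ∃ f, f ∈ A ∧ ((¬ ∀ f ∈ A, f t = f s) → (f t = 0 ∧ f s = 1)) := by
    intro t
    by_cases h : ∀ f ∈ A, f t = f s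
    · exact ⟨1, A.one_mem, fun h' => absurd h h'⟩
    · obtain ⟨f, hf, h0, h1⟩ := sep_fun A h; exact ⟨f, hf, fun _ => ⟨h0, h1⟩⟩
  choose g hgA hgval using key
  have heq : (fun u => if ∀ f ∈ A, f u = f s then (1:F) else 0) = ∏ t ∈ T, g t := by
    funext u
    rw [Finset.prod_apply]
    by_cases hu : ∀ f ∈ A, f u = f s
    · rw [if_pos hu]
      refine (Finset.prod_eq_one ?_).symm
      intro t ht
      have ht' := (Finset.mem_filter.mp ht).2
      rw [hu (g t) (hgA t), (hgval t ht').2]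
    · rw [if_neg hu]
      have huT : u ∈ T := by
        rw [hT, Finset.mem_filter]; exact ⟨Finset.mem_univ u, hu⟩
      exact (Finset.prod_eq_zero (f := fun c => g c u) huT (hgval u hu).1).symm
  rw [heq]
  exact A.prod_mem fun t _ => hgA t

lemma algClass_eq {𝒦 : Set (Set S)} (h𝒦 : Setoid.IsPartition 𝒦) {B : Set S} (hB : B ∈ 𝒦)
    {s : S} (hs : s ∈ B) : {t : S | ∀ f ∈ MapPart F 𝒦, f t = f s} = B := by
  ext t
  constructor
  · intro ht
    have hval := ht (B.indicator (1 : S → F)) (indicator_mem_MapPart h𝒦 hB)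
    have h1 : B.indicator (1 : S → F) s = 1 := by
      rw [Set.indicator_of_mem hs]; rfl
    by_contra htB
    rw [Set.indicator_of_notMem htB, h1] at hval
    exact zero_ne_one hval
  · intro ht f hf
    exact hf B hB t ht s hs

lemma stmt0_part1 (𝒦 : Set (Set S)) (h𝒦 : Setoid.IsPartition 𝒦) :
    algPart F (MapPart F 𝒦) = 𝒦 := by
  ext C
  constructor
  · rintro ⟨s, rfl⟩
    obtain ⟨B, ⟨hB, hsB⟩, -⟩ := h𝒦.2 s
    rw [show {t : S | ∀ f ∈ MapPart F 𝒦, f t = f s} = B from algClass_eq h𝒦 hB hsB]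
    exact hB
  · intro hC
    have hCne : C ≠ ∅ := fun h => h𝒦.1 (h ▸ hC)
    obtain ⟨s, hs⟩ := Set.nonempty_iff_ne_empty.mpr hCne
    exact ⟨s, (algClass_eq h𝒦 hC hs).symm⟩

lemma stmt0_part2a (A : Subalgebra F (S → F)) : Setoid.IsPartition (algPart F A) := by
  constructor
  · rintro ⟨s, hs⟩
    have hmem : s ∈ {t : S | ∀ f ∈ A, f t = f s} := fun f hf => rfl
    rw [← hs] at hmem
    exact hmem
  · intro a
    refine ⟨{t : S | ∀ f ∈ A, f t = f a}, ⟨⟨a, rfl⟩, fun f hf => rfl⟩, ?_⟩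
    rintro C ⟨⟨s, rfl⟩, haC⟩
    ext t
    simp only [Set.mem_setOf_eq]
    exact ⟨fun ht f hf => (ht f hf).trans (haC f hf).symm,
      fun ht f hf => (ht f hf).trans (haC f hf)⟩

open Classical in
lemma stmt0_part2b (A : Subalgebra F (S → F)) : MapPart F (algPart F A) = A := by
  apply le_antisymm
  · intro f hf
    have hf' := mem_MapPart.mp hf
    let St : Setoid S := ⟨fun u v => ∀ g ∈ A, g u = g v,
      ⟨fun u g _ => rfl, fun h g hg => (h g hg).symm,
        fun h1 h2 g hg => (h1 g hg).trans (h2 g hg)⟩⟩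
    haveI : Fintype (Quotient St) := Fintype.ofFinite _
    have hrepr : f = ∑ c : Quotient St, f (Quotient.out c) •
        (fun u => if ∀ g ∈ A, g u = g (Quotient.out c) then (1:F) else 0) := by
      funext u
      rw [Finset.sum_apply, Finset.sum_eq_single (⟦u⟧ : Quotient St)]
      · have hout : ∀ g ∈ A, g u = g (Quotient.out (⟦u⟧ : Quotient St)) := by
          have h := Quotient.mk_out (s := St) u
          exact fun g hg => (h g hg).symm
        simp only [Pi.smul_apply, smul_eq_mul]
        rw [if_pos hout, mul_one]
        exact hf' {t : S | ∀ g ∈ A, g t = g (Quotient.out (⟦u⟧ : Quotient St))}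
          ⟨Quotient.out (⟦u⟧ : Quotient St), rfl⟩ u hout
          (Quotient.out (⟦u⟧ : Quotient St)) (fun g hg => rfl)
      · intro b _ hb
        simp only [Pi.smul_apply, smul_eq_mul]
        rw [if_neg, mul_zero]
        intro hcon
        exact hb (((Quotient.sound (hcon : St.r u (Quotient.out b))).trans
          (Quotient.out_eq b)).symm)
      · intro h; exact absurd (Finset.mem_univ _) h
    rw [hrepr]
    exact A.sum_mem fun c _ => A.smul_mem (class_indicator_mem A _) _
  · intro f hf
    rw [mem_MapPart]
    rintro K ⟨s, rfl⟩ u hu v hv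
    exact (hu f hf).trans (hv f hf).symm

lemma stmt0_part3 (𝒦 𝒧 : Set (Set S)) (h𝒦 : Setoid.IsPartition 𝒦)
    (h𝒧 : Setoid.IsPartition 𝒧) :
    Refines 𝒦 𝒧 ↔ MapPart F 𝒧 ≤ MapPart F 𝒦 := by
  constructor
  · intro href f hf
    rw [mem_MapPart]
    intro K hK u hu v hv
    obtain ⟨B, hB, hKB⟩ := href K hK
    exact hf B hB u (hKB hu) v (hKB hv)
  · intro hle K hK
    have hKne : K ≠ ∅ := fun h => h𝒦.1 (h ▸ hK)
    obtain ⟨s, hs⟩ := Set.nonempty_iff_ne_empty.mpr hKne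
    obtain ⟨B, ⟨hB, hsB⟩, -⟩ := h𝒧.2 s
    refine ⟨B, hB, fun t ht => ?_⟩
    have hind := hle (indicator_mem_MapPart h𝒧 hB)
    have hval := hind K hK t ht s hs
    have h1 : B.indicator (1 : S → F) s = 1 := by
      rw [Set.indicator_of_mem hsB]; rfl
    by_contra htB
    rw [Set.indicator_of_notMem htB, h1] at hval
    exact zero_ne_one hval

end Stmt0Helpers

/-- The map `𝒦 ↦ Map_𝒦(S,F)` is a bijection from partitions of `S`
onto unital `F`-subalgebras of `S → F`, with inverse `A ↦ algPart F A`, and it is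
order-reversing for refinement and inclusion. -/
theorem stmt0 (S F : Type) [Fintype S] [Field F] :
    (∀ 𝒦 : Set (Set S), Setoid.IsPartition 𝒦 → algPart F (MapPart F 𝒦) = 𝒦) ∧
    (∀ A : Subalgebra F (S → F),
        Setoid.IsPartition (algPart F A) ∧ MapPart F (algPart F A) = A) ∧
    (∀ 𝒦 𝒧 : Set (Set S), Setoid.IsPartition 𝒦 → Setoid.IsPartition 𝒧 →
        (Refines 𝒦 𝒧 ↔ MapPart F 𝒧 ≤ MapPart F 𝒦)) :=
  ⟨stmt0_part1, fun A => ⟨stmt0_part2a A, stmt0_part2b A⟩, stmt0_part3⟩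

end
end

section
/- Let S be a finite set, F a field, and B ⊆ Map(S,F) a set of functions. Then the unital F-subalgebra of Map(S,F) generated by B equals Map_𝒦(S,F), where 𝒦 is the partition of S into the equivalence classes of the relation s ~ t iff b(s) = b(t) for all b ∈ B. -/
open scoped BigOperators

noncomputable section

variable (G : Type) [Group G] [Fintype G]

/-- The unital `F`-subalgebra of `Map(S,F)` generated by `B` equals
`Map_𝒦(S,F)` where `𝒦` is the partition of `S` by `s ~ t ↔ b(s) = b(t)` for all `b ∈ B`. -/
theorem stmt1 (S F : Type) [Fintype S] [Field F] (B : Set (S → F)) :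
    Algebra.adjoin F B
      = MapPart F {C : Set S | ∃ s : S, C = {t : S | ∀ b ∈ B, b t = b s}} := by
  classical
  set rel : S → S → Prop := fun s t => ∀ b ∈ B, b t = b s with hrel
  have hle : Algebra.adjoin F B
      ≤ MapPart F {C : Set S | ∃ s : S, C = {t : S | ∀ b ∈ B, b t = b s}} := by
    rw [Algebra.adjoin_le_iff]
    intro b hb K hK s hs t ht
    obtain ⟨u, rfl⟩ := hK
    rw [Set.mem_setOf_eq] at hs ht
    rw [hs b hb, ht b hb]
  apply le_antisymm hle
  intro f hf
  -- e : for each s an element of adjoin, 1 on class of s, 0 off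
  have hsep : ∀ s t : S, ¬ rel s t → ∃ g ∈ Algebra.adjoin F B, g s = 1 ∧ g t = 0 := by
    intro s t h
    simp only [hrel, not_forall] at h
    obtain ⟨b, hb, hne⟩ := h
    have hd : b s - b t ≠ 0 := sub_ne_zero.mpr (fun h' => hne h'.symm)
    refine ⟨(b s - b t)⁻¹ • (b - algebraMap F (S → F) (b t)), ?_, ?_, ?_⟩
    · exact Subalgebra.smul_mem _
        (Subalgebra.sub_mem _ (Algebra.subset_adjoin hb)
          (Subalgebra.algebraMap_mem _ _)) _
    · show (b s - b t)⁻¹ * (b s - b t) = 1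
      exact inv_mul_cancel₀ hd
    · show (b s - b t)⁻¹ * (b t - b t) = 0
      simp
  have he : ∀ s : S, ∃ e ∈ Algebra.adjoin F B, e s = 1 ∧ ∀ t, ¬ rel s t → e t = 0 := by
    intro s
    choose g hgmem hg1 hg0 using hsep s
    classical
    refine ⟨∏ t ∈ (Finset.univ.filter fun t => ¬ rel s t).attach,
        g t.1 (by simpa using (Finset.mem_filter.mp t.2).2), ?_, ?_, ?_⟩
    · exact Subalgebra.prod_mem _ fun t _ => hgmem _ _
    · rw [Finset.prod_apply]
      exact Finset.prod_eq_one fun t _ => hg1 _ _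
    · intro t ht
      rw [Finset.prod_apply]
      refine Finset.prod_eq_zero (i := ⟨t, by simp [ht]⟩) (Finset.mem_attach _ _) ?_
      exact hg0 _ _
  choose e hemem he1 he0 using he
  -- setoid
  let sd : Setoid S := ⟨rel, ⟨fun s b hb => rfl,
    fun {s t} h b hb => (h b hb).symm,
    fun {s t u} h1 h2 b hb => (h2 b hb).trans (h1 b hb)⟩⟩
  have hconst : ∀ g ∈ Algebra.adjoin F B, ∀ s t : S, rel s t → g s = g t := by
    intro g hg s t hst
    exact (hle hg {u | ∀ b ∈ B, b u = b s} ⟨s, rfl⟩ s (fun b hb => rfl) t hst).symm ▸ rfl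
  have key : f = ∑ q : Quotient sd, f (Quotient.out q) • e (Quotient.out q) := by
    funext u
    rw [Finset.sum_apply]
    rw [Finset.sum_eq_single (Quotient.mk sd u)]
    · have hru : rel (Quotient.out (Quotient.mk sd u)) u := Quotient.mk_out u
      have h1 : e (Quotient.out (Quotient.mk sd u)) u = 1 := by
        rw [← hconst _ (hemem _) _ u hru, he1]
      have h2 : f (Quotient.out (Quotient.mk sd u)) = f u := by
        refine hf {t | ∀ b ∈ B, b t = b (Quotient.out (Quotient.mk sd u))}
          ⟨_, rfl⟩ _ (fun b hb => rfl) u hru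
      rw [Pi.smul_apply, h1, smul_eq_mul, mul_one, h2]
    · intro q _ hq
      have : ¬ rel (Quotient.out q) u := by
        intro h
        exact hq (by rw [← Quotient.out_eq q]; exact Quotient.sound h)
      rw [Pi.smul_apply, he0 _ _ this, smul_zero]
    · intro h
      exact absurd (Finset.mem_univ _) h
  rw [key]
  exact Subalgebra.sum_mem _ fun q _ => Subalgebra.smul_mem _ (hemem _) _

end
end

section
/- Let 𝒦 be a partition of G into G-invariant subsets. Then |𝒦| ≤ |Irpt(𝒦)| (the number of blocks of 𝒦 is at most the number of blocks of Irpt(𝒦)), and the singleton {1_G} consisting of the trivial character is a block of Irpt(𝒦). -/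
open scoped BigOperators

noncomputable section

variable (G : Type) [Group G] [Fintype G]

/-! ### Auxiliary machinery for Statement 7 -/

open CategoryTheory Module
open scoped Classical

section Stmt7Aux

lemma sct7_cardC_ne : ((Fintype.card G : ℂ)) ≠ 0 := Nat.cast_ne_zero.2 Fintype.card_ne_zero

lemma sct7_ortho_aux (V W : FDRep ℂ G) [Simple V] [Simple W] :
    ∑ g : G, V.character g * W.character g⁻¹ =
      if Nonempty (V ≅ W) then (Fintype.card G : ℂ) else 0 := by
  haveI : Invertible (Nat.card G : ℂ) := invertibleOfNonzero (by
    rw [Nat.card_eq_fintype_card]; exact sct7_cardC_ne G)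
  have h := FDRep.char_orthonormal V W
  rw [Nat.card_eq_fintype_card, inv_mul_eq_iff_eq_mul₀ (sct7_cardC_ne G)] at h
  rw [h]
  by_cases hne : Nonempty (V ≅ W) <;> simp [hne]

lemma sct7_ortho (χ ψ : IrrChar G) :
    ∑ g : G, χ.1 g * ψ.1 g⁻¹ = if χ = ψ then (Fintype.card G : ℂ) else 0 := by
  obtain ⟨V, hV, hχ⟩ := χ.2
  obtain ⟨W, hW, hψ⟩ := ψ.2
  haveI := hV; haveI := hW
  have key := sct7_ortho_aux G V W
  have hsum : ∑ g : G, χ.1 g * ψ.1 g⁻¹ = ∑ g : G, V.character g * W.character g⁻¹ := by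
    simp [hχ, hψ]
  rw [hsum, key]
  congr 1
  have hiff : Nonempty (V ≅ W) ↔ χ = ψ := by
    constructor
    · rintro ⟨i⟩
      apply Subtype.ext
      rw [hχ, hψ, FDRep.char_iso i]
    · intro he
      by_contra hne
      have h1 := sct7_ortho_aux G V V
      rw [if_pos ⟨Iso.refl V⟩] at h1
      have h2 : ∑ g : G, V.character g * W.character g⁻¹
          = ∑ g : G, V.character g * V.character g⁻¹ := by
        have : W.character = V.character := by rw [← hψ, ← he, hχ]
        simp [this]
      rw [h2, h1, if_neg hne] at key
      exact sct7_cardC_ne G key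
  simp [hiff]

lemma sct7_irr_one_ne (χ : IrrChar G) : χ.1 1 ≠ 0 := by
  obtain ⟨V, hV, hχ⟩ := χ.2
  haveI := hV
  intro h0
  have hfr : (Module.finrank ℂ V : ℂ) = 0 := by
    rw [← FDRep.char_one V, ← congrFun hχ 1]; exact h0
  have hfr0 : Module.finrank ℂ V = 0 := by exact_mod_cast hfr
  haveI : Subsingleton V := Module.finrank_zero_iff.mp hfr0
  have hzero : ∀ g : G, V.character g = 0 := by
    intro g
    have : V.ρ g = 0 := Subsingleton.elim _ _
    simp [FDRep.character, this]
  have := sct7_ortho G ⟨χ.1, ⟨V, hV, hχ⟩⟩ ⟨χ.1, ⟨V, hV, hχ⟩⟩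
  rw [if_pos rfl] at this
  apply sct7_cardC_ne G
  rw [← this]
  apply Finset.sum_eq_zero
  intro g _
  rw [hχ, hzero g, zero_mul]

lemma sct7_irrchar_linIndep : LinearIndependent ℂ (fun χ : IrrChar G => (χ.1 : G → ℂ)) := by
  rw [linearIndependent_iff']
  intro s c hc χ hχs
  have h0 : ∑ g : G, (∑ ψ ∈ s, c ψ • ψ.1) g * χ.1 g⁻¹ = 0 := by
    rw [hc]; simp
  rw [show (∑ ψ ∈ s, c ψ • ψ.1) = fun g => ∑ ψ ∈ s, c ψ * ψ.1 g by
    funext g; simp [Finset.sum_apply]] at h0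
  have hs : ∑ ψ ∈ s, c ψ * (∑ g : G, ψ.1 g * χ.1 g⁻¹) = 0 := by
    rw [← h0]
    simp only [Finset.mul_sum, Finset.sum_mul]
    rw [Finset.sum_comm]
    simp [mul_assoc]
  rw [Finset.sum_eq_single_of_mem χ hχs] at hs
  · rw [sct7_ortho, if_pos rfl] at hs
    exact (mul_eq_zero.mp hs).resolve_right (sct7_cardC_ne G)
  · intro ψ _ hψχ
    rw [sct7_ortho, if_neg hψχ, mul_zero]

lemma sct7_irrchar_finite : Finite (IrrChar G) :=
  (sct7_irrchar_linIndep G).finite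

lemma sct7_fdrep_hom_comm {X Y : FDRep ℂ G} (f : X ⟶ Y) (g : G) (x : X) :
    f.hom (X.ρ g x) = Y.ρ g (f.hom x) :=
  LinearMap.ext_iff.1 (congrArg (fun h => h.hom.hom) (f.comm g)) x

theorem sct7_simple_of {W : Type} [AddCommGroup W] [Module ℂ W] [FiniteDimensional ℂ W]
    (ρ : Representation ℂ G W) (hW : Nontrivial W)
    (hsub : ∀ p : Submodule ℂ W, (∀ g : G, ∀ x ∈ p, ρ g x ∈ p) → p = ⊥ ∨ p = ⊤) :
    Simple (FDRep.of ρ) := by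
  constructor
  intro Y f hm
  constructor
  · intro hiso h0
    rcases hW.exists_pair_ne with ⟨x, y, hxy⟩
    apply hxy
    rw [h0] at hiso
    have h1 : (𝟙 (FDRep.of ρ) : FDRep.of ρ ⟶ FDRep.of ρ) = 0 := by
      rw [← IsIso.inv_hom_id (0 : Y ⟶ FDRep.of ρ), Limits.comp_zero]
    have hz : ∀ w : W, w = 0 := by
      intro w
      have := congrArg (fun (p : FDRep.of ρ ⟶ FDRep.of ρ) => p.hom w) h1
      exact this
    rw [hz x, hz y]
  · intro hf0
    let φ : (Y : Type) →ₗ[ℂ] W := f.hom.hom.hom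
    have hφdef : ∀ y : Y, f.hom y = φ y := fun _ => rfl
    have hker : LinearMap.ker φ = ⊥ := by
      set p := LinearMap.ker φ with hp
      have hstable : ∀ g : G, ∀ x : Y, x ∈ p → Y.ρ g x ∈ p := by
        intro g x hx
        have hcm : φ (Y.ρ g x) = (FDRep.of ρ).ρ g (φ x) := sct7_fdrep_hom_comm G f g x
        rw [LinearMap.mem_ker] at hx ⊢
        rw [hcm, hx, map_zero]
      let ρp : Representation ℂ G p :=
        { toFun := fun g => (Y.ρ g).restrict (fun x hx => hstable g x hx)
          map_one' := by ext x; simp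
          map_mul' := by intro g h; ext x; simp }
      let ι : FDRep.of ρp ⟶ Y :=
        { hom := ConcreteCategory.ofHom (p.subtype : p →ₗ[ℂ] (Y : Type))
          comm := fun g => by ext x; rfl }
      have hcomp : ι ≫ f = 0 := by
        apply Action.hom_ext
        rw [Action.comp_hom, Action.zero_hom]
        apply ConcreteCategory.hom_ext
        intro x
        obtain ⟨x, hx⟩ := x
        exact hx
      have hι : ι = 0 := by
        have := (cancel_mono f).mp (by rw [hcomp, Limits.zero_comp] :
          ι ≫ f = 0 ≫ f)
        exact this
      rw [eq_bot_iff]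
      intro x hx
      have hx0 : ((⟨x, hx⟩ : p) : Y) = 0 := by
        have := congrArg (fun (q : FDRep.of ρp ⟶ Y) => q.hom ⟨x, hx⟩) hι
        exact this
      simpa using hx0
    have hinj : Function.Injective φ := LinearMap.ker_eq_bot.mp hker
    have hφne : φ ≠ 0 := by
      intro h
      apply hf0
      apply Action.hom_ext
      rw [Action.zero_hom]
      apply ConcreteCategory.hom_ext
      intro y
      show φ y = 0
      rw [h]; rfl
    have hrange : LinearMap.range φ = ⊤ := by
      have hstab : ∀ g : G, ∀ x ∈ LinearMap.range φ, ρ g x ∈ LinearMap.range φ := by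
        rintro g x ⟨y, rfl⟩
        refine ⟨Y.ρ g y, ?_⟩
        have hcm : φ (Y.ρ g y) = (FDRep.of ρ).ρ g (φ y) := sct7_fdrep_hom_comm G f g y
        exact hcm
      rcases hsub (LinearMap.range φ) hstab with h | h
      · exfalso
        apply hφne
        apply LinearMap.ext
        intro y
        have hy : φ y ∈ LinearMap.range φ := ⟨y, rfl⟩
        rw [h] at hy
        simpa using hy
      · exact h
    have hbij : Function.Bijective φ :=
      ⟨hinj, LinearMap.range_eq_top.mp hrange⟩
    let e := LinearEquiv.ofBijective φ hbij
    let ginv : FDRep.of ρ ⟶ Y :=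
      { hom := ConcreteCategory.ofHom (e.symm : W →ₗ[ℂ] (Y : Type))
        comm := fun g => by
          apply ConcreteCategory.hom_ext
          intro w
          apply hinj
          show φ (e.symm ((FDRep.of ρ).ρ g w)) = φ (Y.ρ g (e.symm w))
          have hcm : φ (Y.ρ g (e.symm w)) = (FDRep.of ρ).ρ g (φ (e.symm w)) :=
            sct7_fdrep_hom_comm G f g (e.symm w)
          rw [hcm]
          have h1 : φ (e.symm ((FDRep.of ρ).ρ g w)) = (FDRep.of ρ).ρ g w := e.apply_symm_apply _
          have h2 : φ (e.symm w) = w := e.apply_symm_apply _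
          rw [h1, h2] }
    refine ⟨⟨ginv, ?_, ?_⟩⟩
    · apply Action.hom_ext
      rw [Action.comp_hom, Action.id_hom]
      apply ConcreteCategory.hom_ext
      intro y
      show e.symm (φ y) = y
      exact e.symm_apply_apply y
    · apply Action.hom_ext
      rw [Action.comp_hom, Action.id_hom]
      apply ConcreteCategory.hom_ext
      intro w
      show φ (e.symm w) = w
      exact e.apply_symm_apply w

lemma sct7_trivChar_isIrr :
    ∃ V : FDRep ℂ G, Simple V ∧ ((fun _ => 1 : G → ℂ)) = FDRep.character V := by
  refine ⟨FDRep.of (Representation.trivial ℂ (G := G) (V := ℂ)), ?_, ?_⟩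
  · apply sct7_simple_of G _ (by infer_instance)
    intro p hp
    rcases eq_bot_or_eq_top p with h | h
    · exact Or.inl h
    · exact Or.inr h
  · funext g
    show (1 : ℂ) = FDRep.character _ g
    rw [FDRep.character]
    have hid : (FDRep.of (Representation.trivial ℂ (G := G) (V := ℂ))).ρ g = LinearMap.id := by
      ext x
      rfl
    rw [hid]
    simp only [LinearMap.trace_id]
    have h1 : finrank ℂ (FDRep.of (Representation.trivial ℂ (G := G) (V := ℂ)) : Type) = 1 :=
      finrank_self ℂ
    rw [h1, Nat.cast_one]

instance sct7_ma_findim : FiniteDimensional ℂ (MonoidAlgebra ℂ G) :=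
  Module.Finite.equiv ((Finsupp.linearEquivFunOnFinite ℂ ℂ G).symm.trans (MonoidAlgebra.coeffLinearEquiv ℂ).symm)

lemma sct7_ma_decomp (a : MonoidAlgebra ℂ G) : a = ∑ g : G, MonoidAlgebra.single g (a.coeff g) := by
  ext h
  rw [MonoidAlgebra.coeff_sum, Finset.sum_apply']
  simp [Finsupp.single_apply]

/-- `ẑ = ∑_g z(g)·g`. -/
def sct7_zhat (z : G → ℂ) : MonoidAlgebra ℂ G := ∑ g : G, MonoidAlgebra.single g (z g)

lemma sct7_zhat_apply (z : G → ℂ) (h : G) : (sct7_zhat G z).coeff h = z h := by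
  rw [sct7_zhat, MonoidAlgebra.coeff_sum, Finset.sum_apply']
  simp [Finsupp.single_apply]

lemma sct7_zhat_comm (z : G → ℂ) (hzc : ∀ g h : G, z (h * g * h⁻¹) = z g)
    (a : MonoidAlgebra ℂ G) : sct7_zhat G z * a = a * sct7_zhat G z := by
  have hsingle : ∀ (h : G) (c : ℂ), sct7_zhat G z * MonoidAlgebra.single h c
      = MonoidAlgebra.single h c * sct7_zhat G z := by
    intro h c
    rw [sct7_zhat, Finset.sum_mul, Finset.mul_sum]
    simp only [MonoidAlgebra.single_mul_single]
    refine Fintype.sum_equiv (MulAut.conj h⁻¹).toEquiv _ _ ?_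
    intro x
    have h1 : x * h = h * ((MulAut.conj h⁻¹).toEquiv x) := by
      simp [MulAut.conj_apply]
      group
    have h2 : z ((MulAut.conj h⁻¹).toEquiv x) = z x := by
      have := hzc x h⁻¹
      simpa [MulAut.conj_apply] using this
    rw [h1, h2, mul_comm (z x) c]
  conv_lhs => rw [sct7_ma_decomp G a, Finset.mul_sum]
  conv_rhs => rw [sct7_ma_decomp G a, Finset.sum_mul]
  exact Finset.sum_congr rfl fun h _ => hsingle h (a.coeff h)

/-- The representation of `G` on a left submodule of the group algebra. -/
def sct7_subRep (S : Submodule (MonoidAlgebra ℂ G) (MonoidAlgebra ℂ G)) :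
    Representation ℂ G S where
  toFun g :=
    { toFun := fun x => ⟨MonoidAlgebra.single g 1 * (x : MonoidAlgebra ℂ G), by
        rw [← smul_eq_mul]; exact S.smul_mem _ x.2⟩
      map_add' := fun x y => by apply Subtype.ext; simp [mul_add]
      map_smul' := fun c x => by apply Subtype.ext; simp [mul_smul_comm] }
  map_one' := by
    apply LinearMap.ext; intro x; apply Subtype.ext
    simp [← MonoidAlgebra.one_def]
  map_mul' g h := by
    apply LinearMap.ext; intro x; apply Subtype.ext
    have h1 : MonoidAlgebra.single (g*h) (1:ℂ) = MonoidAlgebra.single g 1 * MonoidAlgebra.single h 1 := by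
      rw [MonoidAlgebra.single_mul_single, one_mul]
    show MonoidAlgebra.single (g*h) (1:ℂ) * (x : MonoidAlgebra ℂ G) = _
    rw [h1, mul_assoc]
    rfl

lemma sct7_subRep_findim (S : Submodule (MonoidAlgebra ℂ G) (MonoidAlgebra ℂ G)) :
    FiniteDimensional ℂ S :=
  FiniteDimensional.of_injective ((S.subtype).restrictScalars ℂ) Subtype.val_injective

lemma sct7_subRep_simple (S : Submodule (MonoidAlgebra ℂ G) (MonoidAlgebra ℂ G))
    (hS : IsSimpleModule (MonoidAlgebra ℂ G) S) : Simple (FDRep.of (sct7_subRep G S)) := by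
  haveI := hS
  haveI : Nontrivial S := IsSimpleModule.nontrivial (MonoidAlgebra ℂ G) S
  haveI : FiniteDimensional ℂ S := sct7_subRep_findim G S
  apply sct7_simple_of G _ ‹Nontrivial S›
  intro p hp
  let q : Submodule (MonoidAlgebra ℂ G) S :=
    { carrier := p
      add_mem' := fun ha hb => p.add_mem ha hb
      zero_mem' := p.zero_mem
      smul_mem' := by
        intro a x hx
        have hsum : a • x = ∑ g : G, MonoidAlgebra.single g (a.coeff g) • x := by
          rw [← Finset.sum_smul, ← sct7_ma_decomp G a]
        show a • x ∈ p
        rw [hsum]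
        apply Submodule.sum_mem
        intro g _
        have hsx : MonoidAlgebra.single g (a.coeff g) • x = (a.coeff g) • (sct7_subRep G S g x) := by
          apply Subtype.ext
          show MonoidAlgebra.single g (a.coeff g) * (x : MonoidAlgebra ℂ G) = _
          have hcoe : ((a.coeff g • sct7_subRep G S g x : S) : MonoidAlgebra ℂ G)
              = a.coeff g • (MonoidAlgebra.single g 1 * (x : MonoidAlgebra ℂ G)) := rfl
          rw [hcoe, ← smul_mul_assoc]
          congr 1
          rw [MonoidAlgebra.smul_single]
          simp
        rw [hsx]
        exact p.smul_mem _ (hp g x hx) }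
  rcases eq_bot_or_eq_top q with h | h
  · left
    rw [eq_bot_iff]
    intro x hx
    have hxq : x ∈ q := hx
    rw [h, Submodule.mem_bot] at hxq
    simpa [Submodule.mem_bot] using hxq
  · right
    rw [eq_top_iff]
    intro x _
    show x ∈ q
    rw [h]
    trivial

lemma sct7_kill (z : G → ℂ) (hzc : ∀ g h : G, z (h * g * h⁻¹) = z g)
    (horth : ∀ χ : IrrChar G, ∑ g : G, z g * χ.1 g = 0)
    (S : Submodule (MonoidAlgebra ℂ G) (MonoidAlgebra ℂ G))
    (hS : IsSimpleModule (MonoidAlgebra ℂ G) S) :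
    ∀ x : S, sct7_zhat G z * (x : MonoidAlgebra ℂ G) = 0 := by
  haveI := hS
  haveI : Nontrivial S := IsSimpleModule.nontrivial (MonoidAlgebra ℂ G) S
  haveI : FiniteDimensional ℂ S := sct7_subRep_findim G S
  let m0 : S →ₗ[ℂ] S :=
    { toFun := fun x => ⟨sct7_zhat G z * (x : MonoidAlgebra ℂ G), by
        rw [← smul_eq_mul]; exact S.smul_mem _ x.2⟩
      map_add' := fun x y => by apply Subtype.ext; simp [mul_add]
      map_smul' := fun c x => by apply Subtype.ext; simp [mul_smul_comm] }
  obtain ⟨c, hc⟩ := Module.End.exists_eigenvalue m0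
  obtain ⟨v, hv⟩ := hc.exists_hasEigenvector
  have hvm : sct7_zhat G z * (v : MonoidAlgebra ℂ G) = c • (v : MonoidAlgebra ℂ G) := by
    have := hv.apply_eq_smul
    have hcoe := congrArg (fun (t : S) => (t : MonoidAlgebra ℂ G)) this
    simpa [m0] using hcoe
  let K : Submodule (MonoidAlgebra ℂ G) S :=
    { carrier := {x : S | sct7_zhat G z * (x : MonoidAlgebra ℂ G) = c • (x : MonoidAlgebra ℂ G)}
      add_mem' := by
        intro a b ha hb
        show sct7_zhat G z * _ = c • _
        push_cast
        rw [mul_add, ha, hb, smul_add]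
      zero_mem' := by
        show sct7_zhat G z * _ = c • _
        simp
      smul_mem' := by
        intro a x hx
        show sct7_zhat G z * ((a • x : S) : MonoidAlgebra ℂ G)
            = c • ((a • x : S) : MonoidAlgebra ℂ G)
        have hcoe : ((a • x : S) : MonoidAlgebra ℂ G) = a * (x : MonoidAlgebra ℂ G) := rfl
        rw [hcoe, ← mul_assoc, sct7_zhat_comm G z hzc a, mul_assoc, hx, mul_smul_comm] }
  have hKtop : K = ⊤ := by
    rcases eq_bot_or_eq_top K with h | h
    · exfalso
      apply hv.2
      have : v ∈ K := hvm
      rw [h, Submodule.mem_bot] at this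
      exact this
    · exact h
  have hall : ∀ x : S, sct7_zhat G z * (x : MonoidAlgebra ℂ G) = c • (x : MonoidAlgebra ℂ G) := by
    intro x
    have : x ∈ K := by rw [hKtop]; trivial
    exact this
  -- compute trace of m0 in two ways
  have hm0sum : m0 = ∑ g : G, z g • (sct7_subRep G S g : S →ₗ[ℂ] S) := by
    apply LinearMap.ext
    intro x
    apply Subtype.ext
    have hL : ((m0 x : S) : MonoidAlgebra ℂ G)
        = sct7_zhat G z * (x : MonoidAlgebra ℂ G) := rfl
    have hR : (((∑ g : G, z g • (sct7_subRep G S g : S →ₗ[ℂ] S)) x : S) : MonoidAlgebra ℂ G)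
        = ∑ g : G, z g • (MonoidAlgebra.single g 1 * (x : MonoidAlgebra ℂ G)) := by
      rw [LinearMap.sum_apply]
      rw [Submodule.coe_sum]
      apply Finset.sum_congr rfl
      intro g _
      rfl
    rw [hL, hR, sct7_zhat, Finset.sum_mul]
    apply Finset.sum_congr rfl
    intro g _
    rw [← smul_mul_assoc]
    congr 1
    rw [MonoidAlgebra.smul_single]
    simp
  have htr1 : LinearMap.trace ℂ S m0 = ∑ g : G, z g * LinearMap.trace ℂ S (sct7_subRep G S g) := by
    rw [hm0sum, map_sum]
    apply Finset.sum_congr rfl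
    intro g _
    rw [LinearMap.map_smul, smul_eq_mul]
  have hχirr : IsIrrChar G (FDRep.character (FDRep.of (sct7_subRep G S))) :=
    ⟨FDRep.of (sct7_subRep G S), sct7_subRep_simple G S hS, rfl⟩
  have hcharval : ∀ g : G, FDRep.character (FDRep.of (sct7_subRep G S)) g
      = LinearMap.trace ℂ S (sct7_subRep G S g) := fun g => rfl
  have htr0 : LinearMap.trace ℂ S m0 = 0 := by
    rw [htr1]
    have h := horth ⟨FDRep.character (FDRep.of (sct7_subRep G S)), hχirr⟩
    exact h
  have hm0id : m0 = c • (LinearMap.id : S →ₗ[ℂ] S) := by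
    apply LinearMap.ext
    intro x
    apply Subtype.ext
    have hL : ((m0 x : S) : MonoidAlgebra ℂ G)
        = sct7_zhat G z * (x : MonoidAlgebra ℂ G) := rfl
    rw [hL, hall x]
    rfl
  have hc0 : c = 0 := by
    have h1 : LinearMap.trace ℂ S (c • (LinearMap.id : S →ₗ[ℂ] S)) = 0 := by
      rw [← hm0id]; exact htr0
    rw [LinearMap.map_smul, LinearMap.trace_id, smul_eq_mul] at h1
    rcases mul_eq_zero.mp h1 with h | h
    · exact h
    · exfalso
      have : (finrank ℂ S : ℂ) ≠ 0 := by
        have hpos : 0 < finrank ℂ S := finrank_pos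
        exact_mod_cast hpos.ne'
      exact this h
  intro x
  rw [hall x, hc0, zero_smul]

lemma sct7_completeness (z : G → ℂ) (hzc : ∀ g h : G, z (h * g * h⁻¹) = z g)
    (horth : ∀ χ : IrrChar G, ∑ g : G, z g * χ.1 g = 0) : ∀ g : G, z g = 0 := by
  have hz0 : sct7_zhat G z = 0 := by
    let T : Submodule (MonoidAlgebra ℂ G) (MonoidAlgebra ℂ G) :=
      { carrier := {a | sct7_zhat G z * a = 0}
        add_mem' := by
          intro a b ha hb
          show sct7_zhat G z * (a + b) = 0
          rw [mul_add, ha, hb, add_zero]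
        zero_mem' := by
          show sct7_zhat G z * 0 = 0
          rw [mul_zero]
        smul_mem' := by
          intro r a ha
          show sct7_zhat G z * (r • a) = 0
          rw [smul_eq_mul, ← mul_assoc, sct7_zhat_comm G z hzc r, mul_assoc, ha, mul_zero] }
    have hle : sSup {m : Submodule (MonoidAlgebra ℂ G) (MonoidAlgebra ℂ G)
        | IsSimpleModule (MonoidAlgebra ℂ G) m} ≤ T := by
      apply sSup_le
      intro S hS x hx
      exact sct7_kill G z hzc horth S hS ⟨x, hx⟩
    rw [IsSemisimpleModule.sSup_simples_eq_top] at hle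
    have h1 : (1 : MonoidAlgebra ℂ G) ∈ T := hle trivial
    have : sct7_zhat G z * 1 = 0 := h1
    rwa [mul_one] at this
  intro g
  rw [← sct7_zhat_apply G z g, hz0]
  rfl

lemma sct7_charSum_eq (f : G → ℂ) (K : Set G) :
    charSum G f K = ∑ x : G, if x ∈ K then f x else 0 := by
  rw [charSum]
  have h1 : ∑ᶠ g ∈ K, f g = ∑ x ∈ K.toFinset, f x := by
    conv_lhs => rw [← Set.coe_toFinset K]
    exact finsum_mem_coe_finset _ _
  rw [h1]
  rw [show K.toFinset = Finset.univ.filter (fun x => x ∈ K) from by ext x; simp]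
  rw [Finset.sum_filter]

end Stmt7Aux

/-- If `𝒦` is a `G`-invariant partition of `G`, then `|𝒦| ≤ |Irpt 𝒦|` and
the singleton of the trivial character is a block of `Irpt 𝒦`. -/
theorem stmt7 (G : Type) [Group G] [Fintype G] (𝒦 : Set (Set G))
    (hpart : Setoid.IsPartition 𝒦) (hinv : ∀ K ∈ 𝒦, GInv G K) :
    𝒦.ncard ≤ (Irpt G 𝒦).ncard ∧
    ∃ triv : IrrChar G, (∀ g : G, triv.1 g = 1) ∧
      ({triv} : Set (IrrChar G)) ∈ Irpt G 𝒦 := by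
  classical
  haveI : Finite (IrrChar G) := sct7_irrchar_finite G
  haveI : Fintype (IrrChar G) := Fintype.ofFinite _
  have hKfin : 𝒦.Finite := Set.toFinite _
  haveI : Fintype ↥𝒦 := hKfin.fintype
  -- the block of an element
  set block : G → Set G := fun x => Classical.choose (hpart.2 x) with hblockdef
  have hblock𝒦 : ∀ x : G, block x ∈ 𝒦 ∧ x ∈ block x :=
    fun x => (Classical.choose_spec (hpart.2 x)).1
  have hblockuniq : ∀ (x : G) (K : Set G), K ∈ 𝒦 → x ∈ K → K = block x :=
    fun x K h1 h2 => (Classical.choose_spec (hpart.2 x)).2 K ⟨h1, h2⟩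
  have hsum_block : ∀ (F : ↥𝒦 → ℂ) (x : G),
      ∑ K : ↥𝒦, (if x ∈ (K : Set G) then F K else 0) = F ⟨block x, (hblock𝒦 x).1⟩ := by
    intro F x
    rw [Fintype.sum_eq_single (⟨block x, (hblock𝒦 x).1⟩ : ↥𝒦)]
    · rw [if_pos (hblock𝒦 x).2]
    · intro K hK
      rw [if_neg]
      intro hx
      apply hK
      apply Subtype.ext
      exact (hblockuniq x K K.2 hx).symm ▸ rfl
  set v : Set G → (IrrChar G → ℂ) := fun K χ => charSum G χ.1 K / χ.1 1 with hv
  set bl : IrrChar G → Set (IrrChar G) := fun χ =>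
    {ψ : IrrChar G | ∀ K ∈ 𝒦, charSum G ψ.1 K / ψ.1 1 = charSum G χ.1 K / χ.1 1} with hbldef
  have hblP : ∀ χ : IrrChar G, bl χ ∈ Irpt G 𝒦 := fun χ => ⟨χ, rfl⟩
  have hmem_bl : ∀ χ : IrrChar G, χ ∈ bl χ := fun χ K _ => rfl
  constructor
  · -- counting
    have hLI : LinearIndependent ℂ (fun K : ↥𝒦 => v (K : Set G)) := by
      rw [Fintype.linearIndependent_iff]
      intro c hc K0
      set z : G → ℂ := fun x => c ⟨block x, (hblock𝒦 x).1⟩ with hz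
      have hzc : ∀ g h : G, z (h * g * h⁻¹) = z g := by
        intro g h
        have h1 : block g = block (h * g * h⁻¹) :=
          hblockuniq (h * g * h⁻¹) (block g) (hblock𝒦 g).1
            (hinv (block g) (hblock𝒦 g).1 h g (hblock𝒦 g).2)
        have h2 : (⟨block (h * g * h⁻¹), (hblock𝒦 (h * g * h⁻¹)).1⟩ : ↥𝒦)
            = ⟨block g, (hblock𝒦 g).1⟩ := Subtype.ext h1.symm
        rw [hz]
        simp only []
        rw [h2]
      have horth : ∀ χ : IrrChar G, ∑ x : G, z x * χ.1 x = 0 := by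
        intro χ
        have hc1 := congrFun hc χ
        have hc2 : ∑ K : ↥𝒦, c K * (charSum G χ.1 (K : Set G) / χ.1 1) = 0 := by
          simpa [hv, Finset.sum_apply] using hc1
        have hc3 : ∑ K : ↥𝒦, c K * charSum G χ.1 (K : Set G) = 0 := by
          have h4 := congrArg (fun t => t * χ.1 1) hc2
          simp only [Finset.sum_mul, zero_mul] at h4
          rw [← h4]
          apply Finset.sum_congr rfl
          intro K _
          rw [mul_assoc, div_mul_cancel₀ _ (sct7_irr_one_ne G χ)]
        have hswap : ∑ x : G, z x * χ.1 x = ∑ K : ↥𝒦, c K * charSum G χ.1 (K : Set G) := by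
          have e1 : ∀ x : G, z x * χ.1 x
              = ∑ K : ↥𝒦, (if x ∈ (K : Set G) then c K * χ.1 x else 0) :=
            fun x => (hsum_block (fun K => c K * χ.1 x) x).symm
          calc ∑ x : G, z x * χ.1 x
              = ∑ x : G, ∑ K : ↥𝒦, (if x ∈ (K : Set G) then c K * χ.1 x else 0) :=
                Finset.sum_congr rfl (fun x _ => e1 x)
            _ = ∑ K : ↥𝒦, ∑ x : G, (if x ∈ (K : Set G) then c K * χ.1 x else 0) :=
                Finset.sum_comm
            _ = ∑ K : ↥𝒦, c K * charSum G χ.1 (K : Set G) := by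
                apply Finset.sum_congr rfl
                intro K _
                rw [sct7_charSum_eq, Finset.mul_sum]
                apply Finset.sum_congr rfl
                intro x _
                split <;> simp
        rw [hswap, hc3]
      have hz0 := sct7_completeness G z hzc horth
      obtain ⟨x0, hx0⟩ : ∃ x, x ∈ (K0 : Set G) := by
        rcases Set.eq_empty_or_nonempty (K0 : Set G) with h | h
        · exact absurd (h ▸ K0.2) hpart.1
        · exact h
      have hb : (⟨block x0, (hblock𝒦 x0).1⟩ : ↥𝒦) = K0 :=
        Subtype.ext (hblockuniq x0 (K0 : Set G) K0.2 hx0).symm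
      have := hz0 x0
      rw [hz] at this
      simp only [] at this
      rw [hb] at this
      exact this
    have hPfin : (Irpt G 𝒦).Finite := Set.toFinite _
    haveI : Fintype ↥(Irpt G 𝒦) := hPfin.fintype
    have hrep : ∀ Y : ↥(Irpt G 𝒦), ∃ χ : IrrChar G, (Y : Set (IrrChar G)) = bl χ := by
      intro Y
      obtain ⟨χ, hχ⟩ := Y.2
      exact ⟨χ, hχ⟩
    set rep : ↥(Irpt G 𝒦) → IrrChar G := fun Y => Classical.choose (hrep Y) with hrepdef
    have hrep_spec : ∀ Y : ↥(Irpt G 𝒦), (Y : Set (IrrChar G)) = bl (rep Y) :=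
      fun Y => Classical.choose_spec (hrep Y)
    set blp : IrrChar G → ↥(Irpt G 𝒦) := fun χ => ⟨bl χ, hblP χ⟩ with hblpdef
    set w : ↥𝒦 → (↥(Irpt G 𝒦) → ℂ) := fun K Y => v (K : Set G) (rep Y) with hwdef
    have hfact : ∀ K : ↥𝒦, (LinearMap.funLeft ℂ ℂ blp) (w K) = v (K : Set G) := by
      intro K
      funext χ
      show v (K : Set G) (rep (blp χ)) = v (K : Set G) χ
      have h1 : χ ∈ bl (rep (blp χ)) := by
        rw [← hrep_spec (blp χ)]
        exact hmem_bl χ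
      exact (h1 (K : Set G) K.2).symm
    have hLIw : LinearIndependent ℂ w := by
      apply LinearIndependent.of_comp (LinearMap.funLeft ℂ ℂ blp)
      have he : (⇑(LinearMap.funLeft ℂ ℂ blp) ∘ w) = fun K : ↥𝒦 => v (K : Set G) := by
        funext K
        exact hfact K
      rw [he]
      exact hLI
    have hcard := hLIw.fintype_card_le_finrank
    have h𝒦 : 𝒦.ncard = Fintype.card ↥𝒦 := by
      rw [← Nat.card_coe_set_eq, Nat.card_eq_fintype_card]
    have hP : (Irpt G 𝒦).ncard = Fintype.card ↥(Irpt G 𝒦) := by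
      rw [← Nat.card_coe_set_eq, Nat.card_eq_fintype_card]
    rw [h𝒦, hP]
    calc Fintype.card ↥𝒦 ≤ finrank ℂ (↥(Irpt G 𝒦) → ℂ) := hcard
      _ = Fintype.card ↥(Irpt G 𝒦) := Module.finrank_pi ℂ
  · -- the trivial character is a singleton block
    obtain ⟨Vt, hVt, htrivchar⟩ := sct7_trivChar_isIrr G
    set triv : IrrChar G := ⟨fun _ => 1, ⟨Vt, hVt, htrivchar⟩⟩ with htrivdef
    refine ⟨triv, fun g => rfl, ⟨triv, ?_⟩⟩
    have hKsum : ∀ f : G → ℂ, ∑ K : ↥𝒦, charSum G f (K : Set G) = ∑ x : G, f x := by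
      intro f
      calc ∑ K : ↥𝒦, charSum G f (K : Set G)
          = ∑ K : ↥𝒦, ∑ x : G, (if x ∈ (K : Set G) then f x else 0) :=
            Finset.sum_congr rfl (fun K _ => sct7_charSum_eq G f (K : Set G))
        _ = ∑ x : G, ∑ K : ↥𝒦, (if x ∈ (K : Set G) then f x else 0) := Finset.sum_comm
        _ = ∑ x : G, f x :=
            Finset.sum_congr rfl (fun x _ => hsum_block (fun _ => f x) x)
    ext ψ
    simp only [Set.mem_singleton_iff, Set.mem_setOf_eq]
    constructor
    · rintro rfl
      intro K hK
      rfl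
    · intro hψ
      have hψ1 : ψ.1 1 ≠ 0 := sct7_irr_one_ne G ψ
      have heach : ∀ K : ↥𝒦, charSum G ψ.1 (K : Set G)
          = ψ.1 1 * charSum G (fun _ => (1:ℂ)) (K : Set G) := by
        intro K
        have h1 := hψ (K : Set G) K.2
        rw [div_one] at h1
        rw [← h1, mul_comm, div_mul_cancel₀ _ hψ1]
      have hsψ : ∑ x : G, ψ.1 x = ψ.1 1 * (Fintype.card G : ℂ) := by
        rw [← hKsum ψ.1]
        rw [Finset.sum_congr rfl (fun K _ => heach K), ← Finset.mul_sum,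
          hKsum (fun _ => (1:ℂ))]
        congr 1
        simp
      have horth := sct7_ortho G ψ triv
      have htrinv : ∀ x : G, triv.1 x⁻¹ = 1 := fun x => rfl
      rw [Finset.sum_congr rfl (fun x _ => by rw [htrinv x, mul_one])] at horth
      by_contra hne
      rw [if_neg hne] at horth
      rw [horth] at hsψ
      rcases mul_eq_zero.mp hsψ.symm with h | h
      · exact hψ1 h
      · exact sct7_cardC_ne G h

end
end

section
/- Let (𝒳,𝒦) be a supercharacter theory of G. For each X ∈ 𝒳 set d_X := gcd{χ(1) : χ ∈ X} and τ_X := (1/d_X)·σ_X. Then every character γ of G (i.e. the character of some finite-dimensional complex representation of G) that is constant on each member of 𝒦 is a linear combination γ = Σ_{X ∈ 𝒳} a_X τ_X with nonnegative integer coefficients a_X. In particular, each product τ_X τ_Y (X, Y ∈ 𝒳) is a nonnegative integer linear combination of the τ_Z, Z ∈ 𝒳. -/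
open scoped BigOperators

noncomputable section

variable (G : Type) [Group G] [Fintype G]

/-- `γ` is the character of some finite-dimensional complex representation of `G`. -/
def IsChar (G : Type) [Group G] [Fintype G] (γ : G → ℂ) : Prop :=
  ∃ V : FDRep ℂ G, γ = FDRep.character V

set_option linter.unusedSectionVars false

namespace SCTAux

open CategoryTheory CategoryTheory.MonoidalCategory
open scoped Classical

variable {G : Type} [Group G] [Fintype G]

/-- fixed representation for an irreducible character -/
def repOf (χ : IrrChar G) : FDRep ℂ G := χ.2.choose

lemma repOf_simple (χ : IrrChar G) : Simple (repOf χ) := χ.2.choose_spec.1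

lemma char_repOf (χ : IrrChar G) : χ.1 = FDRep.character (repOf χ) := χ.2.choose_spec.2

lemma cardG_ne_zero : (Fintype.card G : ℂ) ≠ 0 :=
  Nat.cast_ne_zero.2 Fintype.card_ne_zero

/-- the bilinear pairing `f ↦ (∑ g, f g * h g⁻¹)/|G|` as a linear functional -/
def Bf (h : G → ℂ) : (G → ℂ) →ₗ[ℂ] ℂ where
  toFun f := (∑ g : G, f g * h g⁻¹) / (Fintype.card G : ℂ)
  map_add' f₁ f₂ := by
    simp only [Pi.add_apply, add_mul, Finset.sum_add_distrib, add_div]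
  map_smul' c f := by
    simp only [Pi.smul_apply, smul_eq_mul, RingHom.id_apply, ← Finset.mul_sum, mul_assoc,
      mul_div_assoc]

lemma Bf_apply (h f : G → ℂ) : Bf h f = (∑ g : G, f g * h g⁻¹) / (Fintype.card G : ℂ) := rfl

lemma Bf_orthonormal (χ ψ : IrrChar G) : Bf ψ.1 χ.1 = if χ = ψ then 1 else 0 := by
  classical
  letI : Invertible ((Nat.card G : ℂ)) :=
    invertibleOfNonzero (by rw [Nat.card_eq_fintype_card]; exact cardG_ne_zero)
  letI : Fintype G := ‹Fintype G›
  haveI := repOf_simple χ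
  haveI := repOf_simple ψ
  have h := FDRep.char_orthonormal (k := ℂ) (G := G) (repOf χ) (repOf ψ)
  rw [Nat.card_eq_fintype_card, ← smul_eq_mul] at h
  have h' : (Fintype.card G : ℂ)⁻¹ • ∑ g : G, (repOf χ).character g * (repOf ψ).character g⁻¹ =
      if Nonempty (repOf χ ≅ repOf ψ) then 1 else 0 := h
  rw [Bf_apply, char_repOf χ, char_repOf ψ, div_eq_inv_mul, ← smul_eq_mul, h']
  by_cases hiso : Nonempty (repOf χ ≅ repOf ψ)
  · have hcψ : χ = ψ :=
      Subtype.ext (by rw [char_repOf χ, char_repOf ψ, FDRep.char_iso hiso.some])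
    rw [if_pos hiso, if_pos hcψ]
  · have hne : χ ≠ ψ := by
      rintro rfl
      exact hiso ⟨Iso.refl _⟩
    rw [if_neg hiso, if_neg hne]

lemma linearIndependent_irrChar :
    LinearIndependent ℂ (fun χ : IrrChar G => χ.1) := by
  classical
  rw [linearIndependent_iff']
  intro s coef hsum χ₀ hχ₀
  have h := congrArg (Bf χ₀.1) hsum
  rw [map_sum, map_zero] at h
  have h2 : ∀ χ ∈ s, Bf χ₀.1 (coef χ • χ.1) = if χ = χ₀ then coef χ else 0 := by
    intro χ _
    rw [map_smul, Bf_orthonormal]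
    by_cases hc : χ = χ₀ <;> simp [hc]
  rw [Finset.sum_congr rfl h2, Finset.sum_ite_eq' s χ₀ coef, if_pos hχ₀] at h
  exact h

lemma finite_irrChar : Finite (IrrChar G) :=
  haveI : Module.Finite ℂ (G → ℂ) := inferInstance
  linearIndependent_irrChar.finite

lemma char_one_ne_zero (χ : IrrChar G) : χ.1 1 ≠ 0 := by
  haveI := repOf_simple χ
  rw [char_repOf χ, FDRep.char_one]
  intro h
  have h0 : Module.finrank ℂ (repOf χ) = 0 := by exact_mod_cast h
  have hs : Subsingleton (repOf χ) := Module.finrank_zero_iff.mp h0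
  have : (𝟙 (repOf χ) : repOf χ ⟶ repOf χ) = 0 := by
    apply Action.hom_ext
    apply FGModuleCat.hom_ext
    apply LinearMap.ext
    intro v
    exact @Subsingleton.elim _ hs _ _
  exact CategoryTheory.id_nonzero (repOf χ) this

lemma Bf_char_nat (γ : G → ℂ) (hγ : IsChar G γ) (χ : IrrChar G) :
    ∃ m : ℕ, Bf χ.1 γ = m := by
  obtain ⟨W, rfl⟩ := hγ
  letI : Invertible ((Nat.card G : ℂ)) :=
    invertibleOfNonzero (by rw [Nat.card_eq_fintype_card]; exact cardG_ne_zero)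
  set T : FDRep ℂ G := W ⊗ FDRep.of (Representation.dual (repOf χ).ρ) with hT
  refine ⟨Module.finrank ℂ (Representation.invariants T.ρ), ?_⟩
  have hterm : ∀ g : G, W.character g * χ.1 g⁻¹ = T.character g := by
    intro g
    rw [char_repOf χ, ← FDRep.char_dual, hT, FDRep.char_tensor]
    rfl
  rw [Bf_apply]
  simp only [hterm]
  rw [div_eq_inv_mul, ← Nat.card_eq_fintype_card]
  exact FDRep.average_char_eq_finrank_invariants T

/-! ### sigmaChar lemmas -/

lemma sigmaChar_eq_sum (X : Set (IrrChar G)) (hfin : X.Finite) (g : G) :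
    sigmaChar G X g = ∑ χ ∈ hfin.toFinset, χ.1 1 * χ.1 g := by
  rw [sigmaChar, ← finsum_mem_coe_finset, hfin.coe_toFinset]

lemma sigmaChar_eq_fun_sum (X : Set (IrrChar G)) (hfin : X.Finite) :
    sigmaChar G X = ∑ χ ∈ hfin.toFinset, (χ.1 1 • χ.1) := by
  funext g
  rw [sigmaChar_eq_sum X hfin g, Finset.sum_apply]
  rfl

lemma Bf_sigmaChar (X : Set (IrrChar G)) (hfin : X.Finite) (ψ : IrrChar G) :
    Bf ψ.1 (sigmaChar G X) = if ψ ∈ X then ψ.1 1 else 0 := by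
  classical
  rw [sigmaChar_eq_fun_sum X hfin, map_sum]
  have h2 : ∀ χ ∈ hfin.toFinset, Bf ψ.1 (χ.1 1 • χ.1) = if χ = ψ then ψ.1 1 else 0 := by
    intro χ _
    rw [map_smul, Bf_orthonormal]
    by_cases hc : χ = ψ <;> simp [hc]
  rw [Finset.sum_congr rfl h2, Finset.sum_ite_eq' _ ψ (fun _ => ψ.1 1)]
  by_cases hm : ψ ∈ X
  · rw [if_pos (hfin.mem_toFinset.2 hm), if_pos hm]
  · rw [if_neg (fun hh => hm (hfin.mem_toFinset.1 hh)), if_neg hm]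

/-! ### partitions -/

section Partition

variable {α : Type} {P : Set (Set α)}

/-- the block of the partition containing `a` -/
def blk (hP : Setoid.IsPartition P) (a : α) : Set α := (hP.2 a).choose

lemma blk_mem (hP : Setoid.IsPartition P) (a : α) : blk hP a ∈ P := (hP.2 a).choose_spec.1.1

lemma mem_blk (hP : Setoid.IsPartition P) (a : α) : a ∈ blk hP a := (hP.2 a).choose_spec.1.2

lemma blk_eq (hP : Setoid.IsPartition P) {K : Set α} (hK : K ∈ P) {a : α} (ha : a ∈ K) : K = blk hP a :=
  (hP.2 a).choose_spec.2 K ⟨hK, ha⟩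

lemma nonempty_of_mem (hP : Setoid.IsPartition P) {K : Set α} (hK : K ∈ P) : K.Nonempty :=
  Set.nonempty_iff_ne_empty.2 (fun h => hP.1 (h ▸ hK))

lemma finrank_mapPart [Finite α] (hP : Setoid.IsPartition P) : Module.finrank ℂ (Subalgebra.toSubmodule (MapPart ℂ P)) = P.ncard := by
  classical
  haveI : Fintype ↥P := Fintype.ofFinite _
  set rep : ↥P → α := fun K => (nonempty_of_mem hP K.2).choose with hrep
  have hrep_mem : ∀ K : ↥P, rep K ∈ K.1 := fun K => (nonempty_of_mem hP K.2).choose_spec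
  set E : (α → ℂ) →ₗ[ℂ] (↥P → ℂ) :=
    { toFun := fun f => fun K => f (rep K)
      map_add' := fun f g => rfl
      map_smul' := fun c f => rfl } with hE
  set E' := E.comp (Submodule.subtype (Subalgebra.toSubmodule (MapPart ℂ P))) with hE'
  have hinj : Function.Injective E' := by
    intro f₁ f₂ h
    apply Subtype.ext
    funext a
    have h₁ := f₁.2
    have h₂ := f₂.2
    have hb := blk_mem hP a
    have key := congrFun h ⟨blk hP a, hb⟩
    have e₁ : f₁.1 a = f₁.1 (rep ⟨blk hP a, hb⟩) :=
      f₁.2 _ hb a (mem_blk hP a) _ (hrep_mem ⟨blk hP a, hb⟩)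
    have e₂ : f₂.1 a = f₂.1 (rep ⟨blk hP a, hb⟩) :=
      f₂.2 _ hb a (mem_blk hP a) _ (hrep_mem ⟨blk hP a, hb⟩)
    rw [e₁, e₂]
    exact key
  have hsurj : Function.Surjective E' := by
    intro v
    have hmem : (fun a => v ⟨blk hP a, blk_mem hP a⟩) ∈ MapPart ℂ P := by
      intro K hK s hs t ht
      have h1 : K = blk hP s := blk_eq hP hK hs
      have h2 : K = blk hP t := blk_eq hP hK ht
      have h3 : (⟨blk hP s, blk_mem hP s⟩ : ↥P) = ⟨blk hP t, blk_mem hP t⟩ :=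
        Subtype.ext (h1.symm.trans h2)
      exact congrArg v h3
    refine ⟨⟨fun a => v ⟨blk hP a, blk_mem hP a⟩, hmem⟩, ?_⟩
    funext K
    show v ⟨blk hP (rep K), _⟩ = v K
    congr 1
    exact Subtype.ext (blk_eq hP K.2 (hrep_mem K)).symm
  have := (LinearEquiv.ofBijective E' ⟨hinj, hsurj⟩).finrank_eq
  rw [this, Module.finrank_pi, ← Nat.card_coe_set_eq, Nat.card_eq_fintype_card]

end Partition

/-! ### arithmetic -/

lemma exists_nat_coeff {ι : Type} (c : ℂ) (D : ℕ) (n m : ι → ℕ) (s : Finset ι)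
    (hs : s.Nonempty) (hn : ∀ i ∈ s, n i ≠ 0) (hc : ∀ i ∈ s, c * n i = m i)
    (hdvd : ∀ k : ℕ, (∀ i ∈ s, k ∣ n i) → k ∣ D) :
    ∃ a : ℕ, (a : ℂ) = c * D := by
  obtain ⟨i₀, hi₀⟩ := hs
  have hn0 : n i₀ ≠ 0 := hn i₀ hi₀
  set g := Nat.gcd (m i₀) (n i₀) with hgdef
  have hg : g ≠ 0 := fun h => hn0 (Nat.eq_zero_of_gcd_eq_zero_right h)
  set p := m i₀ / g with hpdef
  set q := n i₀ / g with hqdef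
  have hmp : m i₀ = g * p := (Nat.mul_div_cancel' (Nat.gcd_dvd_left _ _)).symm
  have hnq : n i₀ = g * q := (Nat.mul_div_cancel' (Nat.gcd_dvd_right _ _)).symm
  have hq0 : q ≠ 0 := by
    intro h
    rw [h, mul_zero] at hnq
    exact hn0 hnq
  have hcop : Nat.Coprime p q := Nat.coprime_div_gcd_div_gcd (Nat.pos_of_ne_zero hg)
  have hgC : (g : ℂ) ≠ 0 := Nat.cast_ne_zero.2 hg
  have hqC : (q : ℂ) ≠ 0 := Nat.cast_ne_zero.2 hq0
  have hcq : c * q = p := by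
    have h0 := hc i₀ hi₀
    rw [hnq, hmp] at h0
    push_cast at h0
    have h1 : (g : ℂ) * (c * q) = (g : ℂ) * p := by rw [← h0]; ring
    exact mul_left_cancel₀ hgC h1
  have hqd : q ∣ D := by
    apply hdvd
    intro i hi
    have hcast : (q : ℂ) * m i = (p : ℂ) * n i := by
      rw [← hc i hi, ← hcq]; ring
    have hnat : q * m i = p * n i := by exact_mod_cast hcast
    have : q ∣ p * n i := hnat ▸ Dvd.intro (m i) rfl
    exact (hcop.symm).dvd_of_dvd_mul_left this
  refine ⟨p * (D / q), ?_⟩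
  have hDq : D = q * (D / q) := (Nat.mul_div_cancel' hqd).symm
  have : c * (D : ℂ) = (p : ℂ) * ((D / q : ℕ) : ℂ) := by
    conv_lhs => rw [hDq]
    push_cast
    rw [← hcq]
    ring
  rw [this]
  push_cast
  ring

/-! ### characters are closed under sum and product -/

/-- direct sum of two representations -/
def repProd {V W : Type} [AddCommGroup V] [Module ℂ V] [AddCommGroup W] [Module ℂ W]
    (ρ : Representation ℂ G V) (σ : Representation ℂ G W) : Representation ℂ G (V × W) where
  toFun g := (ρ g).prodMap (σ g)
  map_one' := by simp [LinearMap.prodMap_one]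
  map_mul' g h := by simp [LinearMap.prodMap_mul]

/-- direct sum of two f.d. representations -/
def fdrepSum (V W : FDRep ℂ G) : FDRep ℂ G := FDRep.of (repProd V.ρ W.ρ)

theorem char_fdrepSum (V W : FDRep ℂ G) :
    (fdrepSum V W).character = fun g => V.character g + W.character g := by
  funext g
  simp only [FDRep.character, fdrepSum, FDRep.of_ρ]
  exact LinearMap.trace_prodMap' _ _

/-- the zero representation -/
def zeroRep : FDRep ℂ G := FDRep.of (Representation.trivial ℂ (G := G) (V := PUnit))

theorem char_zeroRep : (zeroRep (G := G)).character = fun _ => 0 := by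
  funext g
  have hs : Subsingleton (CoeSort.coe (zeroRep (G := G))) := by
    show Subsingleton PUnit; infer_instance
  show LinearMap.trace ℂ _ _ = 0
  rw [@Subsingleton.elim ((zeroRep (G := G)).V →ₗ[ℂ] (zeroRep (G := G)).V)
    ⟨fun f g => LinearMap.ext fun x => @Subsingleton.elim _ hs _ _⟩
    ((zeroRep (G := G)).ρ g) 0, map_zero]

lemma isChar_zero : IsChar G (fun _ => 0) := ⟨zeroRep, (char_zeroRep).symm⟩

lemma isChar_add {γ₁ γ₂ : G → ℂ} (h₁ : IsChar G γ₁) (h₂ : IsChar G γ₂) :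
    IsChar G (fun g => γ₁ g + γ₂ g) := by
  obtain ⟨V, rfl⟩ := h₁
  obtain ⟨W, rfl⟩ := h₂
  exact ⟨fdrepSum V W, (char_fdrepSum V W).symm⟩

lemma isChar_mul {γ₁ γ₂ : G → ℂ} (h₁ : IsChar G γ₁) (h₂ : IsChar G γ₂) :
    IsChar G (fun g => γ₁ g * γ₂ g) := by
  obtain ⟨V, rfl⟩ := h₁
  obtain ⟨W, rfl⟩ := h₂
  exact ⟨V ⊗ W, by rw [FDRep.char_tensor]; rfl⟩

lemma isChar_sum {ι : Type} (s : Finset ι) (f : ι → G → ℂ)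
    (hf : ∀ i ∈ s, IsChar G (f i)) : IsChar G (fun g => ∑ i ∈ s, f i g) := by
  classical
  induction s using Finset.cons_induction with
  | empty => simpa using (isChar_zero (G := G))
  | cons i s hi ih =>
    simp only [Finset.sum_cons]
    exact isChar_add (hf i (Finset.mem_cons_self i s))
      (ih fun j hj => hf j (Finset.mem_cons.2 (Or.inr hj)))

lemma isChar_nsmul (n : ℕ) (γ : G → ℂ) (h : IsChar G γ) :
    IsChar G (fun g => (n : ℂ) * γ g) := by
  induction n with
  | zero => simpa using (isChar_zero (G := G))
  | succ n ih =>
    have h2 := isChar_add ih h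
    have he : (fun g => ((n + 1 : ℕ) : ℂ) * γ g) = fun g => (n : ℂ) * γ g + γ g := by
      funext g; push_cast; ring
    rw [he]
    exact h2

lemma isChar_irr (χ : IrrChar G) : IsChar G χ.1 := ⟨repOf χ, char_repOf χ⟩

lemma isChar_tau {deg : IrrChar G → ℕ} (hdeg : ∀ χ : IrrChar G, χ.1 1 = (deg χ : ℂ))
    (X : Set (IrrChar G)) (dX : ℕ) (hdX : ∀ χ ∈ X, dX ∣ deg χ) (hdne : (dX : ℂ) ≠ 0) :
    IsChar G (fun g => (dX : ℂ)⁻¹ * sigmaChar G X g) := by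
  haveI : Finite (IrrChar G) := finite_irrChar
  have hfin : X.Finite := Set.toFinite _
  have heq : (fun g => (dX : ℂ)⁻¹ * sigmaChar G X g)
      = fun g => ∑ χ ∈ hfin.toFinset, ((deg χ / dX : ℕ) : ℂ) * χ.1 g := by
    funext g
    rw [sigmaChar_eq_sum X hfin g, Finset.mul_sum]
    refine Finset.sum_congr rfl fun χ hχ => ?_
    have hχX := hfin.mem_toFinset.1 hχ
    have hdd : (deg χ / dX : ℕ) * dX = deg χ := Nat.div_mul_cancel (hdX χ hχX)
    rw [hdeg χ, ← hdd]
    push_cast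
    field_simp
    rw [Nat.mul_div_cancel _ (Nat.pos_of_ne_zero (by exact_mod_cast hdne))]
    ring
  rw [heq]
  exact isChar_sum hfin.toFinset _ fun χ _ => isChar_nsmul _ _ (isChar_irr χ)

/-! ### the key lemma -/

lemma key (𝒳 : Set (Set (IrrChar G))) (𝒦 : Set (Set G)) (hsct : IsSCT G 𝒳 𝒦)
    (deg : IrrChar G → ℕ) (hdeg : ∀ χ : IrrChar G, χ.1 1 = (deg χ : ℂ))
    (d : Set (IrrChar G) → ℕ)
    (hd : ∀ X ∈ 𝒳, (∀ χ ∈ X, d X ∣ deg χ) ∧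
        ∀ m : ℕ, (∀ χ ∈ X, m ∣ deg χ) → m ∣ d X)
    (γ : G → ℂ) (hγ : IsChar G γ)
    (hconst : ∀ K ∈ 𝒦, ∀ g ∈ K, ∀ h ∈ K, γ g = γ h) :
    ∃ a : Set (IrrChar G) → ℕ,
      γ = fun g => ∑ᶠ X ∈ 𝒳, (a X : ℂ) * ((d X : ℂ)⁻¹ * sigmaChar G X g) := by
  classical
  haveI : Finite (IrrChar G) := finite_irrChar
  obtain ⟨hpX, hpK, _, hcard, hconstσ⟩ := hsct
  have hXfin : 𝒳.Finite := Set.toFinite _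
  have hKfin : 𝒦.Finite := Set.toFinite _
  set Xs : Finset (Set (IrrChar G)) := hXfin.toFinset with hXs
  have hXsmem : ∀ X : Set (IrrChar G), X ∈ Xs ↔ X ∈ 𝒳 := fun X => hXfin.mem_toFinset
  -- nonemptiness
  have hKne : 𝒦.Nonempty := ⟨blk hpK 1, blk_mem hpK 1⟩
  have hXne : 𝒳.Nonempty := by
    apply Set.nonempty_of_ncard_ne_zero
    rw [hcard]
    exact ((Set.ncard_pos hKfin).2 hKne).ne'
  haveI : Nonempty ↥Xs := ⟨⟨hXne.choose, (hXsmem _).2 hXne.choose_spec⟩⟩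
  -- the submodule of functions constant on the blocks of 𝒦
  set W := Subalgebra.toSubmodule (MapPart ℂ 𝒦) with hW
  have hmemW : ∀ X ∈ 𝒳, sigmaChar G X ∈ MapPart ℂ 𝒦 :=
    fun X hX K hK s hs t ht => hconstσ X hX K hK s hs t ht
  set v : ↥Xs → ↥W := fun X => ⟨sigmaChar G X.1, hmemW X.1 ((hXsmem _).1 X.2)⟩ with hv
  -- uniqueness of blocks
  have huniq : ∀ (χ : IrrChar G) (X X' : Set (IrrChar G)), X ∈ 𝒳 → X' ∈ 𝒳 →
      χ ∈ X → χ ∈ X' → X = X' := by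
    intro χ X X' hX hX' hm hm'
    exact ((hpX.2 χ).choose_spec.2 X ⟨hX, hm⟩).trans ((hpX.2 χ).choose_spec.2 X' ⟨hX', hm'⟩).symm
  -- linear independence
  have hb_indep : LinearIndependent ℂ v := by
    apply LinearIndependent.of_comp W.subtype
    rw [linearIndependent_iff']
    intro s coef hsum X₀ hX₀
    have hX₀𝒳 : X₀.1 ∈ 𝒳 := (hXsmem _).1 X₀.2
    obtain ⟨χ₀, hχ₀⟩ : X₀.1.Nonempty := nonempty_of_mem hpX hX₀𝒳
    have h := congrArg (Bf χ₀.1) hsum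
    rw [map_sum, map_zero] at h
    have h2 : ∀ X ∈ s, Bf χ₀.1 (coef X • (W.subtype ∘ v) X)
        = if X = X₀ then coef X * χ₀.1 1 else 0 := by
      intro X _
      rw [map_smul]
      have hco : (W.subtype ∘ v) X = sigmaChar G X.1 := rfl
      rw [hco, Bf_sigmaChar X.1 (Set.toFinite _) χ₀]
      have hiff : χ₀ ∈ X.1 ↔ X = X₀ := by
        constructor
        · intro hm
          exact Subtype.ext (huniq χ₀ X.1 X₀.1 ((hXsmem _).1 X.2) hX₀𝒳 hm hχ₀)
        · rintro rfl; exact hχ₀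
      by_cases hXX : X = X₀
      · rw [if_pos (hiff.2 hXX), if_pos hXX, smul_eq_mul]
      · rw [if_neg (fun hm => hXX (hiff.1 hm)), if_neg hXX, smul_eq_mul, mul_zero]
    rw [Finset.sum_congr rfl h2, Finset.sum_ite_eq' s X₀ _, if_pos hX₀] at h
    exact (mul_eq_zero.1 h).resolve_right (char_one_ne_zero χ₀)
  -- dimension count
  have hcards : Fintype.card ↥Xs = Module.finrank ℂ ↥W := by
    rw [Fintype.card_coe, hW]
    rw [finrank_mapPart hpK, ← hcard]
    exact (Set.ncard_eq_toFinset_card 𝒳 hXfin).symm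
  set b := basisOfLinearIndependentOfCardEqFinrank hb_indep hcards with hb
  have hbco : ∀ X : ↥Xs, (b X : G → ℂ) = sigmaChar G X.1 := by
    intro X
    rw [hb, coe_basisOfLinearIndependentOfCardEqFinrank]
  -- γ lies in W
  have hγW : γ ∈ MapPart ℂ 𝒦 := fun K hK s hs t ht => hconst K hK s hs t ht
  set γ' : ↥W := ⟨γ, hγW⟩ with hγ'
  set c : ↥Xs → ℂ := fun X => b.repr γ' X with hc
  have hsum := b.sum_repr γ'
  have hγeq : γ = ∑ X : ↥Xs, c X • sigmaChar G X.1 := by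
    have h1 := congrArg (Subtype.val) hsum
    rw [Submodule.coe_sum] at h1
    have h2 : ∀ X : ↥Xs, ((b.repr γ' X • b X : ↥W) : G → ℂ) = c X • sigmaChar G X.1 := by
      intro X
      rw [Submodule.coe_smul, hbco X, hc]
    rw [Finset.sum_congr rfl (fun X _ => h2 X)] at h1
    exact h1.symm
  -- coefficient identification
  have hcoef : ∀ (X : ↥Xs) (χ : IrrChar G), χ ∈ X.1 → Bf χ.1 γ = c X * χ.1 1 := by
    intro X χ hχ
    rw [hγeq, map_sum]
    have h2 : ∀ X' ∈ (Finset.univ : Finset ↥Xs),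
        Bf χ.1 (c X' • sigmaChar G X'.1) = if X' = X then c X' * χ.1 1 else 0 := by
      intro X' _
      rw [map_smul, Bf_sigmaChar X'.1 (Set.toFinite _) χ]
      have hiff : χ ∈ X'.1 ↔ X' = X := by
        constructor
        · intro hm
          exact Subtype.ext (huniq χ X'.1 X.1 ((hXsmem _).1 X'.2) ((hXsmem _).1 X.2) hm hχ)
        · rintro rfl; exact hχ
      by_cases hXX : X' = X
      · rw [if_pos (hiff.2 hXX), if_pos hXX, smul_eq_mul]
      · rw [if_neg (fun hm => hXX (hiff.1 hm)), if_neg hXX, smul_eq_mul, mul_zero]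
    rw [Finset.sum_congr rfl h2, Finset.sum_ite_eq' _ X _, if_pos (Finset.mem_univ X)]
  -- degrees are nonzero
  have hdegne : ∀ χ : IrrChar G, deg χ ≠ 0 := by
    intro χ h0
    apply char_one_ne_zero χ
    rw [hdeg χ, h0, Nat.cast_zero]
  -- arithmetic: the coefficients are nonnegative integer multiples of 1/d X
  have hex : ∀ X : ↥Xs, ∃ aX : ℕ, (aX : ℂ) = c X * d X.1 := by
    intro X
    have hX𝒳 : X.1 ∈ 𝒳 := (hXsmem _).1 X.2
    have hXne' : X.1.Nonempty := nonempty_of_mem hpX hX𝒳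
    have hXfin' : X.1.Finite := Set.toFinite _
    refine exists_nat_coeff (c X) (d X.1) deg (fun χ => (Bf_char_nat γ hγ χ).choose)
      hXfin'.toFinset ⟨hXne'.choose, hXfin'.mem_toFinset.2 hXne'.choose_spec⟩
      (fun χ _ => hdegne χ) ?_ ?_
    · intro χ hχ
      have h1 := hcoef X χ (hXfin'.mem_toFinset.1 hχ)
      have h2 := (Bf_char_nat γ hγ χ).choose_spec
      rw [← hdeg χ, ← h1]; exact h2
    · intro k hk
      exact (hd X.1 hX𝒳).2 k (fun χ hχ => hk χ (hXfin'.mem_toFinset.2 hχ))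
  choose a' ha' using hex
  have hdne : ∀ X : ↥Xs, (d X.1 : ℂ) ≠ 0 := by
    intro X
    have hX𝒳 : X.1 ∈ 𝒳 := (hXsmem _).1 X.2
    obtain ⟨χ₀, hχ₀⟩ : X.1.Nonempty := nonempty_of_mem hpX hX𝒳
    have hdvd := (hd X.1 hX𝒳).1 χ₀ hχ₀
    refine Nat.cast_ne_zero.2 (fun h0 => hdegne χ₀ ?_)
    rw [h0] at hdvd
    exact Nat.eq_zero_of_zero_dvd hdvd
  have hc_eq : ∀ X : ↥Xs, c X = (a' X : ℂ) * (d X.1 : ℂ)⁻¹ := by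
    intro X
    rw [ha' X]
    exact (mul_inv_cancel_right₀ (hdne X) (c X)).symm
  set A : Set (IrrChar G) → ℕ := fun X => if h : X ∈ Xs then a' ⟨X, h⟩ else 0 with hA
  refine ⟨A, ?_⟩
  funext g
  have hLHS : γ g = ∑ X : ↥Xs, c X * sigmaChar G X.1 g := by
    rw [hγeq, Finset.sum_apply]
    rfl
  have hstep : ∀ X : ↥Xs, c X * sigmaChar G X.1 g
      = (fun Y => (A Y : ℂ) * ((d Y : ℂ)⁻¹ * sigmaChar G Y g)) X.1 := by
    intro X
    have hAX : A X.1 = a' X := by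
      rw [hA]
      simp only
      rw [dif_pos X.2]
    simp only [hAX]
    rw [hc_eq X]
    ring
  rw [hLHS, ← hXfin.coe_toFinset, finsum_mem_coe_finset,
    Finset.sum_congr rfl (fun X _ => hstep X)]
  exact Finset.sum_coe_sort hXfin.toFinset
    (fun Y => (A Y : ℂ) * ((d Y : ℂ)⁻¹ * sigmaChar G Y g))

end SCTAux

/-- In a supercharacter theory `(𝒳,𝒦)`, with `d_X = gcd{χ(1) : χ ∈ X}`
and `τ_X = (1/d_X)σ_X`, every character constant on the members of `𝒦` is a nonnegative
integer combination of the `τ_X`; in particular each `τ_X τ_Y` is. -/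
theorem stmt15 (G : Type) [Group G] [Fintype G] (𝒳 : Set (Set (IrrChar G)))
    (𝒦 : Set (Set G)) (hsct : IsSCT G 𝒳 𝒦)
    (deg : IrrChar G → ℕ) (hdeg : ∀ χ : IrrChar G, χ.1 1 = (deg χ : ℂ))
    (d : Set (IrrChar G) → ℕ)
    (hd : ∀ X ∈ 𝒳, (∀ χ ∈ X, d X ∣ deg χ) ∧
        ∀ m : ℕ, (∀ χ ∈ X, m ∣ deg χ) → m ∣ d X)
    (γ : G → ℂ) (hγ : IsChar G γ)
    (hconst : ∀ K ∈ 𝒦, ∀ g ∈ K, ∀ h ∈ K, γ g = γ h) :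
    (∃ a : Set (IrrChar G) → ℕ,
        γ = fun g => ∑ᶠ X ∈ 𝒳, (a X : ℂ) * ((d X : ℂ)⁻¹ * sigmaChar G X g)) ∧
    (∀ X ∈ 𝒳, ∀ Y ∈ 𝒳, ∃ a : Set (IrrChar G) → ℕ,
        (fun g => ((d X : ℂ)⁻¹ * sigmaChar G X g) * ((d Y : ℂ)⁻¹ * sigmaChar G Y g))
          = fun g => ∑ᶠ Z ∈ 𝒳, (a Z : ℂ) * ((d Z : ℂ)⁻¹ * sigmaChar G Z g)) := by
  have hdegne : ∀ χ : IrrChar G, deg χ ≠ 0 := fun χ h0 =>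
    SCTAux.char_one_ne_zero χ (by rw [hdeg χ, h0, Nat.cast_zero])
  have hdne : ∀ X ∈ 𝒳, (d X : ℂ) ≠ 0 := by
    intro X hX
    obtain ⟨χ₀, hχ₀⟩ : X.Nonempty := SCTAux.nonempty_of_mem hsct.1 hX
    have hdvd := (hd X hX).1 χ₀ hχ₀
    exact Nat.cast_ne_zero.2 (fun h0 => hdegne χ₀ (Nat.eq_zero_of_zero_dvd (h0 ▸ hdvd)))
  constructor
  · exact SCTAux.key 𝒳 𝒦 hsct deg hdeg d hd γ hγ hconst
  · intro X hX Y hY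
    have hτX := SCTAux.isChar_tau hdeg X (d X) (hd X hX).1 (hdne X hX)
    have hτY := SCTAux.isChar_tau hdeg Y (d Y) (hd Y hY).1 (hdne Y hY)
    have hprod := SCTAux.isChar_mul hτX hτY
    apply SCTAux.key 𝒳 𝒦 hsct deg hdeg d hd _ hprod
    intro K hK g hg h hh
    show ((d X : ℂ)⁻¹ * sigmaChar G X g) * ((d Y : ℂ)⁻¹ * sigmaChar G Y g)
      = ((d X : ℂ)⁻¹ * sigmaChar G X h) * ((d Y : ℂ)⁻¹ * sigmaChar G Y h)
    rw [hsct.2.2.2.2 X hX K hK g hg h hh, hsct.2.2.2.2 Y hY K hK g hg h hh]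

end
end
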